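/- Identifiability of the three-component mixture when μ ≠ 0. Let φ(x; m, s) = (1/(s√(2π))) exp(−(x−m)²/(2s²)) denote the density of a normal distribution with mean m and standard deviation s > 0. Suppose μ, ν > 0, σ, τ > 0, and p_L, p_R, q_L, q_R > 0 satisfy p_L·φ(x; −μ, σ) + p_R·φ(x; μ, σ) = q_L·φ(x; −ν, τ) + q_R·φ(x; ν, τ) for every x ∈ ℝ. Then σ = τ, μ = ν, p_L = q_L, and p_R = q_R. (In particular, with the normalization μ > 0 the non-null part of the mixture density h(x) = p_0·0 + p_L·φ(x; −μ, σ) + p_R·φ(x; μ, σ) identifies all of its parameters; without the sign normalization, the identifiability issue concerns only the sign of μ, i.e., the simultaneous swap (p_L, −μ) ↔ (p_R, μ).) -/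

import Mathlib

open Real

/-- The density of a normal distribution with mean `m` and standard
deviation `s`. -/
noncomputable def normalPdf (x m s : ℝ) : ℝ :=
  (1 / (s * Real.sqrt (2 * Real.pi))) * Real.exp (-(x - m) ^ 2 / (2 * s ^ 2))

open Filter in
private lemma exp_quad_tendsto_atTop {a b : ℝ} (c : ℝ)
    (hab : 0 < a ∨ (a = 0 ∧ 0 < b)) :
    Tendsto (fun x : ℝ => Real.exp (a * x ^ 2 + b * x + c)) atTop atTop := by
  have hq : Tendsto (fun x : ℝ => a * x ^ 2 + b * x + c) atTop atTop := by
    rcases hab with ha | ⟨ha, hb⟩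
    · have h1 : Tendsto (fun x : ℝ => x * (a * x + b) + c) atTop atTop :=
        tendsto_atTop_add_const_right _ c
          (tendsto_id.atTop_mul_atTop₀
            (tendsto_atTop_add_const_right _ b (tendsto_id.const_mul_atTop ha)))
      refine h1.congr (fun x => by ring)
    · have h1 : Tendsto (fun x : ℝ => b * x + c) atTop atTop :=
        tendsto_atTop_add_const_right _ c (tendsto_id.const_mul_atTop hb)
      refine h1.congr (fun x => by rw [ha]; ring)
  exact Real.tendsto_exp_atTop.comp hq

open Filter in
private lemma exp_quad_tendsto_zero {a b : ℝ} (c : ℝ)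
    (hab : a < 0 ∨ (a = 0 ∧ b < 0)) :
    Tendsto (fun x : ℝ => Real.exp (a * x ^ 2 + b * x + c)) atTop (nhds 0) := by
  have hq : Tendsto (fun x : ℝ => a * x ^ 2 + b * x + c) atTop atBot := by
    rcases hab with ha | ⟨ha, hb⟩
    · have h1 : Tendsto (fun x : ℝ => x * (a * x + b) + c) atTop atBot :=
        tendsto_atBot_add_const_right _ c
          (tendsto_id.atTop_mul_atBot₀
            (tendsto_atBot_add_const_right _ b (tendsto_id.const_mul_atTop_of_neg ha)))
      refine h1.congr (fun x => by ring)
    · have h1 : Tendsto (fun x : ℝ => b * x + c) atTop atBot :=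
        tendsto_atBot_add_const_right _ c (tendsto_id.const_mul_atTop_of_neg hb)
      refine h1.congr (fun x => by rw [ha]; ring)
  exact Real.tendsto_exp_atBot.comp hq

set_option maxHeartbeats 1000000 in
/-- Identifiability of the three-component mixture when `μ ≠ 0`: with the
normalization `μ, ν > 0`, equality of the two-component non-null mixture
densities `p_L φ(x; -μ, σ) + p_R φ(x; μ, σ)` and
`q_L φ(x; -ν, τ) + q_R φ(x; ν, τ)` for all `x` forces `σ = τ`, `μ = ν`,
`p_L = q_L`, and `p_R = q_R`. -/
theorem mixture_identifiable
    (μ ν σ τ pL pR qL qR : ℝ)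
    (hμ : 0 < μ) (hν : 0 < ν) (hσ : 0 < σ) (hτ : 0 < τ)
    (hpL : 0 < pL) (hpR : 0 < pR) (hqL : 0 < qL) (hqR : 0 < qR)
    (h : ∀ x : ℝ,
      pL * normalPdf x (-μ) σ + pR * normalPdf x μ σ =
      qL * normalPdf x (-ν) τ + qR * normalPdf x ν τ) :
    σ = τ ∧ μ = ν ∧ pL = qL ∧ pR = qR := by
  have hπ : (0:ℝ) < 2 * Real.pi := by positivity
  have hS : (0:ℝ) < Real.sqrt (2 * Real.pi) := Real.sqrt_pos.2 hπ
  have hSne := hS.ne'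
  have hσne := hσ.ne'
  have hτne := hτ.ne'
  set A : ℝ := 1 / (2 * τ ^ 2) - 1 / (2 * σ ^ 2) with hA
  set BL : ℝ := -ν / τ ^ 2 - μ / σ ^ 2 with hBL
  set BR : ℝ := -ν / τ ^ 2 + μ / σ ^ 2 with hBR
  set C : ℝ := ν ^ 2 / (2 * τ ^ 2) - μ ^ 2 / (2 * σ ^ 2) with hC
  -- key pointwise identity
  have key : ∀ x : ℝ,
      qL * Real.exp (0 * x ^ 2 + (-(2 * ν / τ ^ 2)) * x + 0) + qR =
      (τ / σ) * (pL * Real.exp (A * x ^ 2 + BL * x + C)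
        + pR * Real.exp (A * x ^ 2 + BR * x + C)) := by
    intro x
    have hx := h x
    simp only [normalPdf, sub_neg_eq_add] at hx
    have e1 : Real.exp ((x - ν) ^ 2 / (2 * τ ^ 2)) * Real.exp (-(x + ν) ^ 2 / (2 * τ ^ 2))
        = Real.exp (0 * x ^ 2 + (-(2 * ν / τ ^ 2)) * x + 0) := by
      rw [← Real.exp_add]; congr 1; field_simp; ring
    have e2 : Real.exp ((x - ν) ^ 2 / (2 * τ ^ 2)) * Real.exp (-(x - ν) ^ 2 / (2 * τ ^ 2))
        = 1 := by
      rw [← Real.exp_add, ← Real.exp_zero]; congr 1; ring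
    have e3 : Real.exp ((x - ν) ^ 2 / (2 * τ ^ 2)) * Real.exp (-(x + μ) ^ 2 / (2 * σ ^ 2))
        = Real.exp (A * x ^ 2 + BL * x + C) := by
      rw [← Real.exp_add]; congr 1; rw [hA, hBL, hC]; field_simp; ring
    have e4 : Real.exp ((x - ν) ^ 2 / (2 * τ ^ 2)) * Real.exp (-(x - μ) ^ 2 / (2 * σ ^ 2))
        = Real.exp (A * x ^ 2 + BR * x + C) := by
      rw [← Real.exp_add]; congr 1; rw [hA, hBR, hC]; field_simp; ring
    linear_combination (norm := (field_simp; ring))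
      (-qL) * e1 + (-qR) * e2 + (τ / σ) * pL * e3 + (τ / σ) * pR * e4
      - (τ * Real.sqrt (2 * Real.pi) * Real.exp ((x - ν) ^ 2 / (2 * τ ^ 2))) * hx
  -- the transformed function tends to qR
  have hlin : Filter.Tendsto
      (fun x : ℝ => qL * Real.exp (0 * x ^ 2 + (-(2 * ν / τ ^ 2)) * x + 0) + qR)
      Filter.atTop (nhds qR) := by
    have h0 : Filter.Tendsto
        (fun x : ℝ => Real.exp (0 * x ^ 2 + (-(2 * ν / τ ^ 2)) * x + 0))
        Filter.atTop (nhds 0) :=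
      exp_quad_tendsto_zero 0 (Or.inr ⟨rfl, by
        have : (0:ℝ) < 2 * ν / τ ^ 2 := by positivity
        linarith⟩)
    have := (h0.const_mul qL).add (tendsto_const_nhds (x := qR))
    simpa using this
  -- main case analysis
  rcases lt_trichotomy σ τ with hστ | hστ | hστ
  · -- σ < τ : A < 0, RHS → 0, so qR = 0, contradiction
    exfalso
    have hAneg : A < 0 := by
      rw [hA]
      have : σ ^ 2 < τ ^ 2 := by nlinarith
      have h1 : 1 / (2 * τ ^ 2) < 1 / (2 * σ ^ 2) := by
        apply one_div_lt_one_div_of_lt <;> nlinarith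
      linarith
    have h1 := exp_quad_tendsto_zero (a := A) (b := BL) C (Or.inl hAneg)
    have h2 := exp_quad_tendsto_zero (a := A) (b := BR) C (Or.inl hAneg)
    have hRHS : Filter.Tendsto
        (fun x : ℝ => (τ / σ) * (pL * Real.exp (A * x ^ 2 + BL * x + C)
          + pR * Real.exp (A * x ^ 2 + BR * x + C))) Filter.atTop (nhds 0) := by
      have := (((h1.const_mul pL).add (h2.const_mul pR)).const_mul (τ / σ))
      simpa using this
    have : qR = 0 := tendsto_nhds_unique (hlin.congr key) hRHS
    linarith
  · -- σ = τ : A = 0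
    have hA0 : A = 0 := by rw [hA, hστ]; ring
    have hBLneg : BL < 0 := by
      rw [hBL]
      have h5 : (0:ℝ) < ν / τ ^ 2 := by positivity
      have h6 : (0:ℝ) < μ / σ ^ 2 := by positivity
      have h7 : -ν / τ ^ 2 = -(ν / τ ^ 2) := by ring
      rw [h7]; linarith
    have h1 := exp_quad_tendsto_zero (a := A) (b := BL) C (Or.inr ⟨hA0, hBLneg⟩)
    rcases lt_trichotomy μ ν with hμν | hμν | hμν
    · -- μ < ν : BR < 0, RHS → 0
      exfalso
      have hBRneg : BR < 0 := by
        rw [hBR, hστ]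
        have h7 : -ν / τ ^ 2 + μ / τ ^ 2 = (μ - ν) / τ ^ 2 := by ring
        rw [h7]
        apply div_neg_of_neg_of_pos (by linarith) (by positivity)
      have h2 := exp_quad_tendsto_zero (a := A) (b := BR) C (Or.inr ⟨hA0, hBRneg⟩)
      have hRHS : Filter.Tendsto
          (fun x : ℝ => (τ / σ) * (pL * Real.exp (A * x ^ 2 + BL * x + C)
            + pR * Real.exp (A * x ^ 2 + BR * x + C))) Filter.atTop (nhds 0) := by
        have := (((h1.const_mul pL).add (h2.const_mul pR)).const_mul (τ / σ))
        simpa using this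
      have : qR = 0 := tendsto_nhds_unique (hlin.congr key) hRHS
      linarith
    · -- μ = ν : done, all parameters equal
      have hC0 : C = 0 := by rw [hC, hστ, hμν]; ring
      have hBR0 : BR = 0 := by rw [hBR, hστ, hμν]; ring
      have hRHS : Filter.Tendsto
          (fun x : ℝ => (τ / σ) * (pL * Real.exp (A * x ^ 2 + BL * x + C)
            + pR * Real.exp (A * x ^ 2 + BR * x + C))) Filter.atTop (nhds pR) := by
        have h2 : Filter.Tendsto (fun x : ℝ => Real.exp (A * x ^ 2 + BR * x + C))
            Filter.atTop (nhds 1) := by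
          have : ∀ x : ℝ, Real.exp (A * x ^ 2 + BR * x + C) = 1 := by
            intro x; rw [hA0, hBR0, hC0]; simp
          exact (tendsto_const_nhds (x := (1:ℝ))).congr (fun x => (this x).symm)
        have := (((h1.const_mul pL).add (h2.const_mul pR)).const_mul (τ / σ))
        have heq : (τ / σ) * (pL * 0 + pR * 1) = pR := by rw [hστ]; field_simp; ring
        rw [heq] at this
        exact this
      have hpRqR : qR = pR := tendsto_nhds_unique (hlin.congr key) hRHS
      refine ⟨hστ, hμν, ?_, hpRqR.symm⟩
      -- now pL = qL from the original equation at x = 0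
      have hx := h 0
      rw [hστ, hμν, ← hpRqR] at hx
      have hpos : 0 < normalPdf 0 (-ν) τ := by
        rw [normalPdf]; positivity
      have : pL * normalPdf 0 (-ν) τ = qL * normalPdf 0 (-ν) τ := by linarith
      exact mul_right_cancel₀ hpos.ne' this
    · -- μ > ν : BR > 0, RHS → atTop
      exfalso
      have hBRpos : 0 < BR := by
        rw [hBR, hστ]
        have h7 : -ν / τ ^ 2 + μ / τ ^ 2 = (μ - ν) / τ ^ 2 := by ring
        rw [h7]
        exact div_pos (by linarith) (by positivity)
      have h2 := exp_quad_tendsto_atTop (a := A) (b := BR) C (Or.inr ⟨hA0, hBRpos⟩)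
      have hRHS : Filter.Tendsto
          (fun x : ℝ => (τ / σ) * (pL * Real.exp (A * x ^ 2 + BL * x + C)
            + pR * Real.exp (A * x ^ 2 + BR * x + C))) Filter.atTop Filter.atTop := by
        refine Filter.Tendsto.const_mul_atTop (by positivity) ?_
        exact ((h1.const_mul pL).add_atTop (h2.const_mul_atTop hpR))
      exact not_tendsto_atTop_of_tendsto_nhds (hlin.congr key) hRHS
  · -- τ < σ : A > 0, RHS → atTop
    exfalso
    have hApos : 0 < A := by
      rw [hA]
      have : τ ^ 2 < σ ^ 2 := by nlinarith
      have h1 : 1 / (2 * σ ^ 2) < 1 / (2 * τ ^ 2) := by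
        apply one_div_lt_one_div_of_lt <;> nlinarith
      linarith
    have h1 := exp_quad_tendsto_atTop (a := A) (b := BL) C (Or.inl hApos)
    have h2 := exp_quad_tendsto_atTop (a := A) (b := BR) C (Or.inl hApos)
    have hRHS : Filter.Tendsto
        (fun x : ℝ => (τ / σ) * (pL * Real.exp (A * x ^ 2 + BL * x + C)
          + pR * Real.exp (A * x ^ 2 + BR * x + C))) Filter.atTop Filter.atTop := by
      refine Filter.Tendsto.const_mul_atTop (by positivity) ?_
      refine Filter.Tendsto.atTop_add_nonneg (h1.const_mul_atTop hpL) ?_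
      intro x; positivity
    exact not_tendsto_atTop_of_tendsto_nhds (hlin.congr key) hRHS
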